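/- With the setup of the circle algebra (CE^*(∂Λ;V), ∂_0) over F_2 with n marked points: call a chord short if it is not the concatenation of two other chords (equivalently, it goes from a marked point to the next marked point counterclockwise), and call a word of chords unconcatable if no two adjacent chords in the word have matching endpoint and starting point. Then the residue classes of unconcatable words of short chords form a basis of the homology H^*(CE, ∂_0). -/

import Mathlib

set_option synthInstance.maxHeartbeats 1000000
set_option maxSynthPendingDepth 3

namespace Stmt10

/-- The chord quiver: vertices are the `n` marked points on the circle, and an arrow
`i ⟶ j` is a chord `c_{ij}^p` (a counterclockwise arc from `i` to `j` passing `p` times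
through the base point), which exists iff `p ≥ 1` or `i < j`. -/
scoped instance chordQuiver (n : ℕ) : Quiver (Fin n) :=
  ⟨fun i j => {p : ℕ // 0 < p ∨ i < j}⟩

/-- The sum (over `F₂`) of all two-letter words obtained by splitting the chord `f` into
two chords at an intermediate marked point. -/
noncomputable def splitD {n : ℕ} {i j : Fin n} (f : i ⟶ j) :
    (Quiver.Path i j) →₀ ZMod 2 :=
  ∑ l ∈ Finset.range (f.val + 1), ∑ kk : Fin n,
    if h : (0 < l ∨ i < kk) ∧ (l < f.val ∨ kk < j) then
      Finsupp.single
        ((Quiver.Path.nil.cons (⟨l, h.1⟩ : i ⟶ kk)).cons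
          (⟨f.val - l, h.2.imp (fun hl => Nat.sub_pos_of_lt hl) id⟩ : kk ⟶ j)) 1
    else 0

/-- The differential `∂₀` of a word of chords over `F₂`: split one letter at a time. -/
noncomputable def pathD {n : ℕ} {i : Fin n} :
    ∀ {j : Fin n}, Quiver.Path i j → (Quiver.Path i j →₀ ZMod 2)
  | _, Quiver.Path.nil => 0
  | _, Quiver.Path.cons q f =>
      Finsupp.mapDomain (fun r => r.cons f) (pathD q) +
      Finsupp.mapDomain (fun s => q.comp s) (splitD f)

/-- The differential `∂₀` on the whole path algebra `CE^*(∂Λ; V)` over `F₂`, viewed as the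
free module on the set of all words (paths) of chords. -/
noncomputable def bigD (n : ℕ) :
    ((Σ i : Fin n, Σ j : Fin n, Quiver.Path i j) →₀ ZMod 2) →ₗ[ZMod 2]
      ((Σ i : Fin n, Σ j : Fin n, Quiver.Path i j) →₀ ZMod 2) :=
  Finsupp.lsum (ZMod 2) fun w =>
    LinearMap.toSpanSingleton (ZMod 2) _
      (Finsupp.mapDomain
        (fun p => (⟨w.1, w.2.1, p⟩ : Σ i : Fin n, Σ j : Fin n, Quiver.Path i j))
        (pathD w.2.2))

/-- A chord is short if it is not the concatenation of two other chords. -/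
def IsShort {n : ℕ} {i j : Fin n} (f : i ⟶ j) : Prop := splitD f = 0

/-- All letters of the word are short chords. -/
def AllShort {n : ℕ} {i : Fin n} : ∀ {j : Fin n}, Quiver.Path i j → Prop
  | _, Quiver.Path.nil => True
  | _, Quiver.Path.cons q f => IsShort f ∧ AllShort q

/-- A word is unconcatable if no two adjacent chords in it have matching endpoint and
starting point.  In this path algebra adjacent chords always match, so this means the
word has at most one letter. -/
def Unconcatable {n : ℕ} {i j : Fin n} (p : Quiver.Path i j) : Prop := p.length ≤ 1

/-- The homology classes of the unconcatable words of short chords. -/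
noncomputable def classOf (n : ℕ)
    (w : {w : Σ i : Fin n, Σ j : Fin n, Quiver.Path i j //
          Unconcatable w.2.2 ∧ AllShort w.2.2})
    (hmem : Finsupp.single (w.val) (1 : ZMod 2) ∈ LinearMap.ker (bigD n)) :
    (LinearMap.ker (bigD n)) ⧸
      ((LinearMap.range (bigD n)).comap (LinearMap.ker (bigD n)).subtype) :=
  Submodule.Quotient.mk ⟨Finsupp.single (w.val) 1, hmem⟩

/-! ### Auxiliary development -/

open Quiver Finsupp
open scoped Classical

variable {n : ℕ}

lemma add_self {M : Type*} [AddCommMonoid M] [Module (ZMod 2) M] (x : M) : x + x = 0 := by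
  have h2 : (2 : ZMod 2) = 0 := rfl
  calc x + x = (2 : ZMod 2) • x := (two_smul (ZMod 2) x).symm
  _ = 0 := by rw [h2, zero_smul]

/-- The length of a chord. -/
def L {i j : Fin n} (f : i ⟶ j) : ℕ := f.val * n + j.val - i.val

lemma lt_base {i j : Fin n} (f : i ⟶ j) : i.val < f.val * n + j.val := by
  rcases f.2 with h | h
  · have : n ≤ f.val * n := Nat.le_mul_of_pos_left n h
    have := i.isLt
    omega
  · have : i.val < j.val := h
    omega

lemma L_pos {i j : Fin n} (f : i ⟶ j) : 0 < L f := by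
  have := lt_base f; unfold L; omega

lemma add_L {i j : Fin n} (f : i ⟶ j) : i.val + L f = f.val * n + j.val := by
  have := lt_base f; unfold L; omega

/-- The marked point at (counterclockwise) distance `d` from `i`. -/
def cutPt (i : Fin n) (d : ℕ) : Fin n := ⟨(i.val + d) % n, Nat.mod_lt _ i.pos⟩

/-- The number of times the arc from `i` of length `d` passes the base point. -/
def cutL (i : Fin n) (d : ℕ) : ℕ := (i.val + d) / n

lemma cut_eq (i : Fin n) (d : ℕ) : cutL i d * n + (cutPt i d).val = i.val + d := by
  simpa [cutL, cutPt, Nat.mul_comm] using Nat.div_add_mod (i.val + d) n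

lemma cutL_le {i j : Fin n} (f : i ⟶ j) {d : ℕ} (h2 : d < L f) : cutL i d ≤ f.val := by
  have h1 := cut_eq i d
  have h3 := add_L f
  by_contra hc
  have : f.val + 1 ≤ cutL i d := by omega
  have : (f.val + 1) * n ≤ cutL i d * n := Nat.mul_le_mul_right n this
  have hj := j.isLt
  have := (cutPt i d).isLt
  nlinarith

lemma fst_prop {i j : Fin n} (f : i ⟶ j) {d : ℕ} (h1 : 0 < d) (_h2 : d < L f) :
    0 < cutL i d ∨ i < cutPt i d := by
  have hc := cut_eq i d
  rcases Nat.eq_zero_or_pos (cutL i d) with h | h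
  · have h0 : cutL i d * n = 0 := by rw [h]; ring
    exact Or.inr (Fin.lt_def.2 (by omega))
  · exact Or.inl h

lemma snd_prop {i j : Fin n} (f : i ⟶ j) {d : ℕ} (_h1 : 0 < d) (h2 : d < L f) :
    0 < f.val - cutL i d ∨ cutPt i d < j := by
  have hle := cutL_le f h2
  rcases lt_or_eq_of_le hle with h | h
  · left; omega
  · right
    have hcut := cut_eq i d
    have hL := add_L f
    refine Fin.lt_def.2 ?_
    have : cutL i d * n = f.val * n := by rw [h]
    omega

/-- The first chord of the splitting at distance `d`. -/
def fstChord {i j : Fin n} (f : i ⟶ j) (d : ℕ) (h1 : 0 < d) (h2 : d < L f) :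
    i ⟶ cutPt i d := ⟨cutL i d, fst_prop f h1 h2⟩

/-- The second chord of the splitting at distance `d`. -/
def sndChord {i j : Fin n} (f : i ⟶ j) (d : ℕ) (h1 : 0 < d) (h2 : d < L f) :
    cutPt i d ⟶ j := ⟨f.val - cutL i d, snd_prop f h1 h2⟩

lemma L_fst {i j : Fin n} (f : i ⟶ j) (d : ℕ) (h1 : 0 < d) (h2 : d < L f) :
    L (fstChord f d h1 h2) = d := by
  have := cut_eq i d
  unfold L fstChord
  simp only
  omega

lemma L_snd {i j : Fin n} (f : i ⟶ j) (d : ℕ) (h1 : 0 < d) (h2 : d < L f) :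
    L (sndChord f d h1 h2) = L f - d := by
  have hc := cut_eq i d
  have hL := add_L f
  have hle := cutL_le f h2
  have hmul : (f.val - cutL i d) * n = f.val * n - cutL i d * n := Nat.sub_mul _ _ _
  have : cutL i d * n ≤ f.val * n := Nat.mul_le_mul_right n hle
  unfold L sndChord
  simp only
  omega

/-- The two-letter word splitting `f` at distance `d`. -/
def splitAt {i j : Fin n} (f : i ⟶ j) (d : ℕ) (h1 : 0 < d) (h2 : d < L f) :
    Quiver.Path i j :=
  (Quiver.Path.nil.cons (fstChord f d h1 h2)).cons (sndChord f d h1 h2)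

/-- Finsupp-valued total version of `splitAt`. -/
noncomputable def splitF {i j : Fin n} (f : i ⟶ j) (d : ℕ) :
    Quiver.Path i j →₀ ZMod 2 :=
  if h : 0 < d ∧ d < L f then Finsupp.single (splitAt f d h.1 h.2) 1 else 0

lemma pair_mem_Ioo {i j : Fin n} (f : i ⟶ j) {l : ℕ} {kk : Fin n}
    (hl : l ≤ f.val) (hc : (0 < l ∨ i < kk) ∧ (l < f.val ∨ kk < j)) :
    l * n + kk.val - i.val ∈ Finset.Ioo 0 (L f) := by
  have hadd := add_L f
  have hlt := lt_base f
  have hkk := kk.isLt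
  have hii := i.isLt
  have hjj := j.isLt
  have h1 : l * n ≤ f.val * n := Nat.mul_le_mul_right n hl
  simp only [Finset.mem_Ioo]
  obtain ⟨hA, hB⟩ := hc
  have hA' : 0 < l ∨ i.val < kk.val := hA.imp id Fin.lt_def.mp
  have hB' : l < f.val ∨ kk.val < j.val := hB.imp id Fin.lt_def.mp
  constructor
  · rcases hA' with h | h
    · have h3 : n ≤ l * n := Nat.le_mul_of_pos_left n h
      omega
    · omega
  · rcases hB' with h | h
    · have h2 : l * n + n ≤ f.val * n := by
        calc l * n + n = (l + 1) * n := (Nat.succ_mul l n).symm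
        _ ≤ f.val * n := Nat.mul_le_mul_right n h
      omega
    · omega

lemma cutL_pair {i : Fin n} {l : ℕ} {kk : Fin n} (hpos : i.val < l * n + kk.val) :
    cutL i (l * n + kk.val - i.val) = l ∧ cutPt i (l * n + kk.val - i.val) = kk := by
  have key : i.val + (l * n + kk.val - i.val) = kk.val + l * n := by omega
  constructor
  · show (i.val + (l * n + kk.val - i.val)) / n = l
    rw [key, Nat.add_mul_div_right _ _ i.pos, Nat.div_eq_of_lt kk.isLt, Nat.zero_add]
  · apply Fin.ext
    show (i.val + (l * n + kk.val - i.val)) % n = kk.val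
    rw [key, Nat.add_mul_mod_self_right, Nat.mod_eq_of_lt kk.isLt]

lemma splitAt_eq_pair {i j : Fin n} (f : i ⟶ j) {d l : ℕ} {kk : Fin n}
    (h1 : 0 < d) (h2 : d < L f) (hL : cutL i d = l) (hK : cutPt i d = kk)
    (p1 : 0 < l ∨ i < kk) (p2 : 0 < f.val - l ∨ kk < j) :
    splitAt f d h1 h2 =
      (Quiver.Path.nil.cons (⟨l, p1⟩ : i ⟶ kk)).cons (⟨f.val - l, p2⟩ : kk ⟶ j) := by
  subst hL hK
  rfl

theorem splitD_eq {i j : Fin n} (f : i ⟶ j) :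
    splitD f = ∑ d ∈ Finset.Ioo 0 (L f), splitF f d := by
  unfold splitD
  rw [← Finset.sum_product']
  rw [← Finset.sum_filter_of_ne
    (p := fun x : ℕ × Fin n => (0 < x.1 ∨ i < x.2) ∧ (x.1 < f.val ∨ x.2 < j))
    (fun x _ hne => by
      by_contra hc
      rw [dif_neg hc] at hne
      exact hne rfl)]
  refine Finset.sum_nbij' (i := fun x => x.1 * n + x.2.val - i.val)
    (j := fun d => (cutL i d, cutPt i d)) ?_ ?_ ?_ ?_ ?_
  · rintro ⟨l, kk⟩ hx
    simp only [Finset.mem_filter, Finset.mem_product, Finset.mem_range, Finset.mem_univ,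
      and_true] at hx
    exact pair_mem_Ioo f (by omega) hx.2
  · intro d hd
    simp only [Finset.mem_Ioo] at hd
    simp only [Finset.mem_filter, Finset.mem_product, Finset.mem_range, Finset.mem_univ,
      and_true, true_and]
    refine ⟨Nat.lt_succ_of_le (cutL_le f hd.2), fst_prop f hd.1 hd.2,
      (snd_prop f hd.1 hd.2).imp (fun h => by omega) id⟩
  · rintro ⟨l, kk⟩ hx
    simp only [Finset.mem_filter, Finset.mem_product, Finset.mem_range, Finset.mem_univ,
      and_true] at hx
    have hmem := pair_mem_Ioo f (by omega) hx.2
    simp only [Finset.mem_Ioo] at hmem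
    have hcut := cutL_pair (i := i) (l := l) (kk := kk) (by omega)
    simp only [Prod.mk.injEq]
    exact ⟨hcut.1, hcut.2⟩
  · intro d hd
    simp only [Finset.mem_Ioo] at hd
    have hc := cut_eq i d
    simp only
    omega
  · rintro ⟨l, kk⟩ hx
    simp only [Finset.mem_filter, Finset.mem_product, Finset.mem_range, Finset.mem_univ,
      and_true] at hx
    have hmem := pair_mem_Ioo f (by omega) hx.2
    have hmem' := hmem
    simp only [Finset.mem_Ioo] at hmem'
    have hcut := cutL_pair (i := i) (l := l) (kk := kk) (by omega)
    rw [dif_pos hx.2, splitF, dif_pos ⟨hmem'.1, hmem'.2⟩]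
    exact congrArg (fun q => Finsupp.single q (1 : ZMod 2))
      (splitAt_eq_pair f hmem'.1 hmem'.2 hcut.1 hcut.2 hx.2.1
        (hx.2.2.imp (fun hl => Nat.sub_pos_of_lt hl) id)).symm

/-- Concatenation of two chords. -/
def merge {a b c : Fin n} (e : a ⟶ b) (f : b ⟶ c) : a ⟶ c :=
  ⟨e.val + f.val, by
    rcases e.2 with h | h
    · exact Or.inl (by omega)
    · rcases f.2 with h' | h'
      · exact Or.inl (by omega)
      · exact Or.inr (h.trans h')⟩

lemma L_merge {a b c : Fin n} (e : a ⟶ b) (f : b ⟶ c) : L (merge e f) = L e + L f := by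
  have h1 := add_L e
  have h2 := add_L f
  have h3 := add_L (merge e f)
  have hv : (merge e f).val = e.val + f.val := rfl
  rw [hv, Nat.add_mul] at h3
  omega

lemma merge_split {i j : Fin n} (f : i ⟶ j) (d : ℕ) (h1 : 0 < d) (h2 : d < L f) :
    merge (fstChord f d h1 h2) (sndChord f d h1 h2) = f := by
  apply Subtype.ext
  show cutL i d + (f.val - cutL i d) = f.val
  have := cutL_le f h2
  omega

/-- The chain homotopy on words: if the last letter is short and the word has at least
two letters, merge the last two letters. -/
noncomputable def hP {i : Fin n} :
    ∀ {j : Fin n}, Quiver.Path i j → (Quiver.Path i j →₀ ZMod 2)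
  | _, .nil => 0
  | _, .cons .nil _ => 0
  | _, .cons (.cons q e) f =>
      if L f = 1 then Finsupp.single (q.cons (merge e f)) 1 else 0

/-- Total length of a word. -/
def totalLen {i : Fin n} : ∀ {j : Fin n}, Quiver.Path i j → ℕ
  | _, .nil => 0
  | _, .cons q f => totalLen q + L f

lemma length_le_totalLen {i j : Fin n} (p : Quiver.Path i j) : p.length ≤ totalLen p := by
  induction p with
  | nil => simp [totalLen]
  | cons q f ih =>
      have := L_pos f
      simp only [Quiver.Path.length_cons, totalLen]
      omega

/-- Projection onto the words of total length at most 1. -/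
noncomputable def piF {i j : Fin n} (p : Quiver.Path i j) : Quiver.Path i j →₀ ZMod 2 :=
  if totalLen p ≤ 1 then Finsupp.single p 1 else 0

/-- Apply a basis-indexed family of vectors as a linear map. -/
noncomputable def ap {α β : Type*} (g : α → (β →₀ ZMod 2)) :
    (α →₀ ZMod 2) →ₗ[ZMod 2] (β →₀ ZMod 2) :=
  Finsupp.lsum (ZMod 2) fun a => LinearMap.toSpanSingleton (ZMod 2) _ (g a)

@[simp] lemma ap_single {α β : Type*} (g : α → β →₀ ZMod 2) (a : α) (c : ZMod 2) :
    ap g (Finsupp.single a c) = c • g a := by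
  simp [ap, LinearMap.toSpanSingleton_apply]

lemma ap_mapDomain {α β γ : Type*} (h : α → γ) (g : γ → β →₀ ZMod 2) (x : α →₀ ZMod 2) :
    ap g (Finsupp.mapDomain h x) = ap (fun a => g (h a)) x := by
  induction x using Finsupp.induction_linear with
  | zero => simp
  | add a b ha hb => rw [Finsupp.mapDomain_add, map_add, ha, hb, map_add]
  | single a b => rw [Finsupp.mapDomain_single, ap_single, ap_single]

lemma map_ap {α β γ : Type*} (T : (β →₀ ZMod 2) →ₗ[ZMod 2] (γ →₀ ZMod 2))
    (g : α → β →₀ ZMod 2) (x : α →₀ ZMod 2) :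
    T (ap g x) = ap (fun a => T (g a)) x := by
  induction x using Finsupp.induction_linear with
  | zero => simp
  | add a b ha hb => rw [map_add, map_add, ha, hb, map_add]
  | single a b => rw [ap_single, ap_single, map_smul]

lemma ap_single_comp {α β : Type*} (h : α → β) (x : α →₀ ZMod 2) :
    ap (fun a => Finsupp.single (h a) (1 : ZMod 2)) x = Finsupp.mapDomain h x := by
  induction x using Finsupp.induction_linear with
  | zero => simp
  | add a b ha hb => rw [map_add, ha, hb, Finsupp.mapDomain_add]
  | single a b => rw [ap_single, Finsupp.mapDomain_single, Finsupp.smul_single, smul_eq_mul,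
      mul_one]

lemma ap_eq_zero_of_support {α β : Type*} (g : α → β →₀ ZMod 2) (x : α →₀ ZMod 2)
    (hg : ∀ a ∈ x.support, g a = 0) : ap g x = 0 := by
  rw [ap, Finsupp.lsum_apply]
  apply Finset.sum_eq_zero
  intro a ha
  simp [LinearMap.toSpanSingleton_apply, hg a ha]

@[simp] lemma pathD_nil {i : Fin n} : pathD (Quiver.Path.nil : Quiver.Path i i) = 0 := rfl

lemma pathD_cons {i a j : Fin n} (q : Quiver.Path i a) (f : a ⟶ j) :
    pathD (q.cons f) =
      Finsupp.mapDomain (fun r => r.cons f) (pathD q) +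
      Finsupp.mapDomain (fun s => q.comp s) (splitD f) := rfl

@[simp] lemma hP_nil {i : Fin n} : hP (Quiver.Path.nil : Quiver.Path i i) = 0 := rfl

@[simp] lemma hP_one {i j : Fin n} (f : i ⟶ j) : hP (Quiver.Path.nil.cons f) = 0 := rfl

@[simp] lemma hP_cons_cons {i a b j : Fin n} (q : Quiver.Path i a) (e : a ⟶ b) (f : b ⟶ j) :
    hP ((q.cons e).cons f) =
      if L f = 1 then Finsupp.single (q.cons (merge e f)) 1 else 0 := rfl

lemma comp_splitAt {a i j : Fin n} (q : Quiver.Path a i) (f : i ⟶ j) (d : ℕ)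
    (h1 : 0 < d) (h2 : d < L f) :
    q.comp (splitAt f d h1 h2) = (q.cons (fstChord f d h1 h2)).cons (sndChord f d h1 h2) := rfl

lemma splitTerm {a i j : Fin n} (q : Quiver.Path a i) (f : i ⟶ j) {d : ℕ}
    (hd : d ∈ Finset.Ioo 0 (L f)) :
    ap (fun s => hP (q.comp s)) (splitF f d) =
      if d = L f - 1 then Finsupp.single (q.cons f) 1 else 0 := by
  simp only [Finset.mem_Ioo] at hd
  rw [splitF, dif_pos ⟨hd.1, hd.2⟩, ap_single, one_smul, comp_splitAt, hP_cons_cons, L_snd]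
  by_cases hd' : d = L f - 1
  · rw [if_pos (by omega), if_pos hd', merge_split]
  · rw [if_neg (by omega), if_neg hd']

lemma ap_hP_comp_splitD {a i j : Fin n} (q : Quiver.Path a i) (f : i ⟶ j) :
    ap (fun s => hP (q.comp s)) (splitD f) =
      if 2 ≤ L f then Finsupp.single (q.cons f) 1 else 0 := by
  rw [splitD_eq, map_sum, Finset.sum_congr rfl (fun d hd => splitTerm q f hd),
    Finset.sum_ite_eq' (Finset.Ioo 0 (L f)) (L f - 1) (fun _ => Finsupp.single (q.cons f) 1)]
  have hpos := L_pos f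
  have : (L f - 1 ∈ Finset.Ioo 0 (L f)) ↔ (2 ≤ L f) := by
    simp only [Finset.mem_Ioo]; omega
  by_cases h : 2 ≤ L f
  · rw [if_pos (this.2 h), if_pos h]
  · rw [if_neg (fun hm => h (this.1 hm)), if_neg h]

lemma Ioo_succ {m : ℕ} (hm : 0 < m) :
    Finset.Ioo 0 (m + 1) = insert m (Finset.Ioo 0 m) := by
  ext x
  simp only [Finset.mem_Ioo, Finset.mem_insert]
  omega

lemma cut_at_L {a b : Fin n} (e : a ⟶ b) : cutL a (L e) = e.val ∧ cutPt a (L e) = b := by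
  have h := cutL_pair (i := a) (l := e.val) (kk := b) (lt_base e)
  unfold L
  exact h

lemma cons_cons_eq {i a b b' j : Fin n} (q : Quiver.Path i a) (e : a ⟶ b) (f : b ⟶ j)
    (e' : a ⟶ b') (f' : b' ⟶ j) (hb : b = b') (he : e.val = e'.val) (hf : f.val = f'.val) :
    (q.cons e).cons f = (q.cons e').cons f' := by
  subst hb
  rw [Subtype.ext he, Subtype.ext hf]

lemma fstChord_irrel {a b c : Fin n} (e : a ⟶ b) (g : a ⟶ c) {d : ℕ}
    (h1 : 0 < d) (h2 : d < L e) (h2' : d < L g) :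
    fstChord e d h1 h2 = fstChord g d h1 h2' := rfl

lemma char2_rearrange {M : Type*} [AddCommMonoid M] [Module (ZMod 2) M] (a b c : M) :
    a + (c + b) + (a + b) = c := by
  have h1 : a + (c + b) + (a + b) = c + (a + a) + (b + b) := by abel
  rw [h1, add_self, add_self, add_zero, add_zero]

theorem homotopy {i j : Fin n} (p : Quiver.Path i j) :
    ap (fun r : Quiver.Path i j => pathD r) (hP p) +
      ap (fun r : Quiver.Path i j => hP r) (pathD p) =
      Finsupp.single p 1 + piF p := by
  match p with
  | .nil =>
      rw [pathD_nil, hP_nil, map_zero, map_zero, piF]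
      rw [if_pos (by simp [totalLen])]
      rw [zero_add]
      exact (add_self _).symm
  | .cons .nil f =>
      rw [hP_one, map_zero, zero_add, pathD_cons, pathD_nil, Finsupp.mapDomain_zero, zero_add,
        ap_mapDomain, ap_hP_comp_splitD, piF]
      have hpos := L_pos f
      have ht : totalLen (Quiver.Path.nil.cons f) = L f := by simp [totalLen]
      by_cases h : 2 ≤ L f
      · rw [if_pos h, if_neg (by omega), add_zero]
      · rw [if_neg h, if_pos (by omega), add_self]
  | .cons (.cons q e) f =>
      have hLe := L_pos e
      have hLf := L_pos f
      rw [pathD_cons ((q.cons e)) f, map_add,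
        ap_mapDomain (fun s => (q.cons e).comp s) (fun r => hP r) (splitD f),
        ap_hP_comp_splitD,
        ap_mapDomain (fun r => r.cons f) (fun r => hP r) (pathD (q.cons e)),
        pathD_cons q e, map_add,
        ap_mapDomain (fun r => r.cons e) (fun a => hP (a.cons f)) (pathD q),
        ap_mapDomain (fun s => q.comp s) (fun a => hP (a.cons f)) (splitD e)]
      have hpi : piF (((q.cons e).cons f)) = 0 := by
        rw [piF, if_neg]
        simp only [totalLen]
        omega
      rw [hpi, add_zero]
      by_cases hf : L f = 1
      · -- last letter is short
        rw [if_neg (show ¬ 2 ≤ L f by omega), add_zero]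
        rw [hP_cons_cons, if_pos hf, ap_single, one_smul, pathD_cons q (merge e f)]
        simp only [hP_cons_cons, if_pos hf]
        rw [ap_single_comp (fun y => Quiver.Path.cons y (merge e f)) (pathD q)]
        -- remaining goal: mapDomain (·.cons g) (pathD q) + mapDomain (q.comp) (splitD g)
        --   + (mapDomain (·.cons g) (pathD q) + T2) = single p 1
        rw [← ap_single_comp (fun s => q.comp s) (splitD (merge e f)), splitD_eq (merge e f),
          splitD_eq e, map_sum, map_sum]
        have hLg : L (merge e f) = L e + 1 := by rw [L_merge, hf]
        rw [hLg, Ioo_succ hLe, Finset.sum_insert (by simp)]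
        have htop : ap (fun s => Finsupp.single (q.comp s) (1 : ZMod 2))
            (splitF (merge e f) (L e)) = Finsupp.single ((q.cons e).cons f) 1 := by
          have h2' : L e < L (merge e f) := by omega
          rw [splitF, dif_pos ⟨hLe, h2'⟩, ap_single, one_smul, comp_splitAt]
          congr 1
          refine cons_cons_eq q _ _ e f (cut_at_L e).2 ?_ ?_
          · exact (cut_at_L e).1
          · show (merge e f).val - cutL _ (L e) = f.val
            rw [(cut_at_L e).1]
            show e.val + f.val - e.val = f.val
            omega
        have hterm : ∀ d ∈ Finset.Ioo 0 (L e),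
            ap (fun s => Finsupp.single (q.comp s) (1 : ZMod 2)) (splitF (merge e f) d) =
            ap (fun s => hP ((q.comp s).cons f)) (splitF e d) := by
          intro d hd
          simp only [Finset.mem_Ioo] at hd
          have h2' : d < L (merge e f) := by omega
          rw [splitF, dif_pos ⟨hd.1, h2'⟩, splitF, dif_pos ⟨hd.1, hd.2⟩, ap_single, ap_single,
            one_smul, one_smul, comp_splitAt, comp_splitAt, hP_cons_cons, if_pos hf]
          rw [fstChord_irrel e (merge e f) hd.1 hd.2 h2']
          refine congrArg (fun z => Finsupp.single z (1 : ZMod 2)) ?_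
          refine congrArg (Quiver.Path.cons _) ?_
          apply Subtype.ext
          show (merge e f).val - cutL _ d = (merge (sndChord e d hd.1 hd.2) f).val
          show e.val + f.val - cutL _ d = (e.val - cutL _ d) + f.val
          have := cutL_le e hd.2
          omega
        rw [Finset.sum_congr rfl hterm, htop]
        exact char2_rearrange _ _ _
      · -- last letter is long
        rw [hP_cons_cons, if_neg hf, map_zero, zero_add, if_pos (by omega)]
        have hz1 : ap (fun a => hP ((a.cons e).cons f)) (pathD q) = 0 := by
          apply ap_eq_zero_of_support
          intro x _
          rw [hP_cons_cons, if_neg hf]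
        rw [hz1, zero_add]
        have hz2 : ap (fun s => hP ((q.comp s).cons f)) (splitD e) = 0 := by
          rw [splitD_eq, map_sum]
          apply Finset.sum_eq_zero
          intro d hd
          simp only [Finset.mem_Ioo] at hd
          rw [splitF, dif_pos ⟨hd.1, hd.2⟩, ap_single, one_smul, comp_splitAt, hP_cons_cons,
            if_neg hf]
        rw [hz2, zero_add]

lemma supp_splitD {i j : Fin n} (f : i ⟶ j) :
    ∀ s ∈ (splitD f).support, s.length = 2 := by
  intro s hs
  rw [splitD_eq] at hs
  obtain ⟨d, hd, hsd⟩ := Finset.mem_biUnion.1 (Finsupp.support_finset_sum hs)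
  simp only [Finset.mem_Ioo] at hd
  rw [splitF, dif_pos ⟨hd.1, hd.2⟩] at hsd
  have := Finsupp.support_single_subset hsd
  rw [Finset.mem_singleton] at this
  subst this
  rfl

lemma supp_pathD {i j : Fin n} (p : Quiver.Path i j) :
    ∀ x ∈ (pathD p).support, 2 ≤ x.length := by
  induction p with
  | nil => intro x hx; simp [pathD_nil] at hx
  | cons q f ih =>
      intro x hx
      rw [pathD_cons] at hx
      rcases Finset.mem_union.1 (Finsupp.support_add hx) with h | h
      · obtain ⟨y, hy, rfl⟩ := Finset.mem_image.1 (Finsupp.mapDomain_support h)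
        have := ih y hy
        simp only [Quiver.Path.length_cons]
        omega
      · obtain ⟨s, hs, rfl⟩ := Finset.mem_image.1 (Finsupp.mapDomain_support h)
        have h2 := supp_splitD f s hs
        rw [Quiver.Path.length_comp]
        omega

lemma piF_pathD {i j : Fin n} (p : Quiver.Path i j) :
    ap (fun r : Quiver.Path i j => piF r) (pathD p) = 0 := by
  apply ap_eq_zero_of_support
  intro x hx
  have h1 := supp_pathD p x hx
  have h2 := length_le_totalLen x
  rw [piF, if_neg (by omega)]

/-- The last letter's length. -/
def lastLen {i j : Fin n} : Quiver.Path i j → ℕ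
  | .nil => 0
  | .cons _ f => L f

lemma lastLen_splitAt {i j : Fin n} (f : i ⟶ j) (d : ℕ) (h1 : 0 < d) (h2 : d < L f) :
    lastLen (splitAt f d h1 h2) = L f - d := L_snd f d h1 h2

lemma isShort_iff {i j : Fin n} (f : i ⟶ j) : IsShort f ↔ L f = 1 := by
  have hpos := L_pos f
  constructor
  · intro h
    by_contra hne
    have h2 : 2 ≤ L f := by omega
    have hmem : (1 : ℕ) ∈ Finset.Ioo 0 (L f) := by
      simp only [Finset.mem_Ioo]; omega
    have h1' : (0:ℕ) < 1 := one_pos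
    have h2' : 1 < L f := by omega
    have hsum : (∑ d ∈ Finset.Ioo 0 (L f), splitF f d) = 0 := by
      rw [← splitD_eq]; exact h
    have heval := Finsupp.ext_iff.1 hsum (splitAt f 1 h1' h2')
    rw [Finset.sum_apply'] at heval
    have hterm : ∀ d ∈ Finset.Ioo 0 (L f),
        (splitF f d) (splitAt f 1 h1' h2') = if d = 1 then 1 else 0 := by
      intro d hd
      simp only [Finset.mem_Ioo] at hd
      rw [splitF, dif_pos ⟨hd.1, hd.2⟩, Finsupp.single_apply]
      by_cases hd1 : d = 1
      · subst hd1
        rw [if_pos rfl, if_pos rfl]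
      · rw [if_neg, if_neg hd1]
        intro hcontra
        have := congrArg lastLen hcontra
        rw [lastLen_splitAt, lastLen_splitAt] at this
        omega
    rw [Finset.sum_congr rfl hterm, Finset.sum_ite_eq' (Finset.Ioo 0 (L f)) 1
      (fun _ => (1 : ZMod 2)), if_pos hmem] at heval
    simp at heval
  · intro h
    show splitD f = 0
    rw [splitD_eq, h, show Finset.Ioo 0 1 = (∅ : Finset ℕ) by decide, Finset.sum_empty]

lemma pathD_short {i j : Fin n} (f : i ⟶ j) (h : IsShort f) :
    pathD (Quiver.Path.nil.cons f) = 0 := by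
  rw [pathD_cons, pathD_nil, Finsupp.mapDomain_zero, zero_add,
    show splitD f = 0 from h, Finsupp.mapDomain_zero]

lemma totalLen_eq_zero {i j : Fin n} (p : Quiver.Path i j) (h : totalLen p = 0) :
    p.length = 0 := by
  have := length_le_totalLen p
  omega

lemma pathD_shortword {i j : Fin n} (p : Quiver.Path i j) (h : totalLen p ≤ 1) :
    pathD p = 0 := by
  match p with
  | .nil => rfl
  | .cons .nil f =>
      have hLf := L_pos f
      have hf : L f = 1 := by
        have ht : totalLen (Quiver.Path.nil.cons f) = 0 + L f := rfl
        omega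
      exact pathD_short f ((isShort_iff f).2 hf)
  | .cons (.cons q e) f =>
      exfalso
      have h1 := L_pos e
      have h2 := L_pos f
      have ht : totalLen ((q.cons e).cons f) = totalLen q + L e + L f := rfl
      omega

lemma basis_of_totalLen {i j : Fin n} (p : Quiver.Path i j) (h : totalLen p ≤ 1) :
    Unconcatable p ∧ AllShort p := by
  match p with
  | .nil => exact ⟨by simp [Unconcatable], trivial⟩
  | .cons .nil f =>
      have hLf := L_pos f
      have hf : L f = 1 := by
        have : totalLen (Quiver.Path.nil.cons f) = 0 + L f := rfl
        omega
      exact ⟨by simp [Unconcatable], ⟨(isShort_iff f).2 hf, trivial⟩⟩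
  | .cons (.cons q e) f =>
      exfalso
      have h1 := L_pos e
      have h2 := L_pos f
      have : totalLen ((q.cons e).cons f) = totalLen q + L e + L f := rfl
      omega

lemma totalLen_of_basis {i j : Fin n} (p : Quiver.Path i j)
    (h1 : Unconcatable p) (h2 : AllShort p) : totalLen p ≤ 1 := by
  match p with
  | .nil => exact Nat.zero_le 1
  | .cons .nil f =>
      have hf : L f = 1 := (isShort_iff f).1 h2.1
      show 0 + L f ≤ 1
      omega
  | .cons (.cons q e) f =>
      exfalso
      have hl : ((q.cons e).cons f).length = q.length + 1 + 1 := rfl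
      have hu : ((q.cons e).cons f).length ≤ 1 := h1
      omega

/-! ### The big module -/

/-- The index type of the free module underlying the path algebra. -/
abbrev BigIx (n : ℕ) := Σ i : Fin n, Σ j : Fin n, Quiver.Path i j

/-- Inclusion of words with fixed endpoints. -/
def emb (i j : Fin n) (p : Quiver.Path i j) : BigIx n := ⟨i, j, p⟩

lemma bigD_eq (n : ℕ) : bigD n = ap (fun w : BigIx n =>
    Finsupp.mapDomain (emb w.1 w.2.1) (pathD w.2.2)) := rfl

/-- The homotopy on the big module. -/
noncomputable def bigH (n : ℕ) :
    ((BigIx n) →₀ ZMod 2) →ₗ[ZMod 2] ((BigIx n) →₀ ZMod 2) :=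
  ap (fun w : BigIx n => Finsupp.mapDomain (emb w.1 w.2.1) (hP w.2.2))

/-- The projection on the big module. -/
noncomputable def bigP (n : ℕ) :
    ((BigIx n) →₀ ZMod 2) →ₗ[ZMod 2] ((BigIx n) →₀ ZMod 2) :=
  ap (fun w : BigIx n => Finsupp.mapDomain (emb w.1 w.2.1) (piF w.2.2))

lemma map_ap' {α β γ : Type*} (h : β → γ) (g : α → β →₀ ZMod 2) (x : α →₀ ZMod 2) :
    Finsupp.mapDomain h (ap g x) = ap (fun a => Finsupp.mapDomain h (g a)) x := by
  have := map_ap (Finsupp.lmapDomain (ZMod 2) (ZMod 2) h) g x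
  simpa [Finsupp.lmapDomain_apply] using this

lemma bigD_single (i j : Fin n) (p : Quiver.Path i j) :
    bigD n (Finsupp.single (emb i j p) 1) = Finsupp.mapDomain (emb i j) (pathD p) := by
  rw [bigD_eq, ap_single, one_smul]
  rfl

lemma bigH_single (i j : Fin n) (p : Quiver.Path i j) :
    bigH n (Finsupp.single (emb i j p) 1) = Finsupp.mapDomain (emb i j) (hP p) := by
  rw [bigH, ap_single, one_smul]
  rfl

lemma bigP_single (i j : Fin n) (p : Quiver.Path i j) :
    bigP n (Finsupp.single (emb i j p) 1) = Finsupp.mapDomain (emb i j) (piF p) := by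
  rw [bigP, ap_single, one_smul]
  rfl

lemma bigD_mapDomain (i j : Fin n) (x : Quiver.Path i j →₀ ZMod 2) :
    bigD n (Finsupp.mapDomain (emb i j) x) =
      Finsupp.mapDomain (emb i j) (ap (fun r : Quiver.Path i j => pathD r) x) := by
  rw [bigD_eq, ap_mapDomain, map_ap']
  rfl

lemma bigH_mapDomain (i j : Fin n) (x : Quiver.Path i j →₀ ZMod 2) :
    bigH n (Finsupp.mapDomain (emb i j) x) =
      Finsupp.mapDomain (emb i j) (ap (fun r : Quiver.Path i j => hP r) x) := by
  rw [bigH, ap_mapDomain, map_ap']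
  rfl

lemma bigP_mapDomain (i j : Fin n) (x : Quiver.Path i j →₀ ZMod 2) :
    bigP n (Finsupp.mapDomain (emb i j) x) =
      Finsupp.mapDomain (emb i j) (ap (fun r : Quiver.Path i j => piF r) x) := by
  rw [bigP, ap_mapDomain, map_ap']
  rfl

theorem big_homotopy (x : (BigIx n) →₀ ZMod 2) :
    bigD n (bigH n x) + bigH n (bigD n x) = x + bigP n x := by
  have h : (bigD n).comp (bigH n) + (bigH n).comp (bigD n) = LinearMap.id + bigP n := by
    apply Finsupp.lhom_ext
    rintro ⟨i, j, p⟩ c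
    have h1 : (Finsupp.single (⟨i, j, p⟩ : BigIx n) c) =
        c • Finsupp.single (emb i j p) (1 : ZMod 2) := by
      rw [Finsupp.smul_single, smul_eq_mul, mul_one]
      rfl
    rw [h1]
    simp only [map_smul, LinearMap.add_apply, LinearMap.comp_apply, LinearMap.id_apply]
    have key : (bigD n) ((bigH n) (Finsupp.single (emb i j p) 1)) +
        (bigH n) ((bigD n) (Finsupp.single (emb i j p) 1)) =
        Finsupp.single (emb i j p) 1 + (bigP n) (Finsupp.single (emb i j p) 1) := by
      rw [bigH_single, bigD_mapDomain, bigD_single, bigH_mapDomain, ← Finsupp.mapDomain_add,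
        homotopy p, Finsupp.mapDomain_add, Finsupp.mapDomain_single, bigP_single]
    exact congrArg (fun z => c • z) key
  have := LinearMap.congr_fun h x
  simpa using this

theorem bigP_bigD (x : (BigIx n) →₀ ZMod 2) : bigP n (bigD n x) = 0 := by
  have h : (bigP n).comp (bigD n) = 0 := by
    apply Finsupp.lhom_ext
    rintro ⟨i, j, p⟩ c
    have h1 : (Finsupp.single (⟨i, j, p⟩ : BigIx n) c) =
        c • Finsupp.single (emb i j p) (1 : ZMod 2) := by
      rw [Finsupp.smul_single, smul_eq_mul, mul_one]
      rfl
    rw [h1]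
    simp only [map_smul, LinearMap.comp_apply, LinearMap.zero_apply]
    rw [bigD_single, bigP_mapDomain, piF_pathD, Finsupp.mapDomain_zero, smul_zero]
  exact LinearMap.congr_fun h x

theorem bigD_bigP (x : (BigIx n) →₀ ZMod 2) : bigD n (bigP n x) = 0 := by
  have h : (bigD n).comp (bigP n) = 0 := by
    apply Finsupp.lhom_ext
    rintro ⟨i, j, p⟩ c
    have h1 : (Finsupp.single (⟨i, j, p⟩ : BigIx n) c) =
        c • Finsupp.single (emb i j p) (1 : ZMod 2) := by
      rw [Finsupp.smul_single, smul_eq_mul, mul_one]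
      rfl
    rw [h1]
    simp only [map_smul, LinearMap.comp_apply, LinearMap.zero_apply]
    rw [bigP_single, bigD_mapDomain]
    have : ap (fun r : Quiver.Path i j => pathD r) (piF p) = 0 := by
      rw [piF]
      by_cases hp : totalLen p ≤ 1
      · rw [if_pos hp, ap_single, one_smul, pathD_shortword p hp]
      · rw [if_neg hp, map_zero]
    rw [this, Finsupp.mapDomain_zero, smul_zero]
  exact LinearMap.congr_fun h x

lemma bigP_single_basis (i j : Fin n) (p : Quiver.Path i j) (h : totalLen p ≤ 1) :
    bigP n (Finsupp.single (emb i j p) 1) = Finsupp.single (emb i j p) 1 := by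
  rw [bigP_single, piF, if_pos h, Finsupp.mapDomain_single]

lemma bigP_single_long (i j : Fin n) (p : Quiver.Path i j) (h : ¬ totalLen p ≤ 1) :
    bigP n (Finsupp.single (emb i j p) 1) = 0 := by
  rw [bigP_single, piF, if_neg h, Finsupp.mapDomain_zero]

lemma supp_bigP {n : ℕ} (x : (BigIx n) →₀ ZMod 2) :
    ∀ a ∈ (bigP n x).support, totalLen a.2.2 ≤ 1 := by
  intro a ha
  rw [bigP, ap, Finsupp.lsum_apply] at ha
  obtain ⟨w, hw, haw⟩ := Finset.mem_biUnion.1 (Finsupp.support_sum ha)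
  have haw' : a ∈ (Finsupp.mapDomain (emb w.1 w.2.1) (piF w.2.2)).support := by
    exact Finsupp.support_smul (b := x w)
      (g := Finsupp.mapDomain (emb w.1 w.2.1) (piF w.2.2))
      (by simpa [LinearMap.toSpanSingleton_apply] using haw)
  obtain ⟨q, hq, rfl⟩ := Finset.mem_image.1 (Finsupp.mapDomain_support haw')
  rw [piF] at hq
  by_cases hp : totalLen w.2.2 ≤ 1
  · rw [if_pos hp] at hq
    have hqq := Finsupp.support_single_subset hq
    rw [Finset.mem_singleton] at hqq
    subst hqq
    exact hp
  · rw [if_neg hp] at hq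
    simp at hq

set_option maxHeartbeats 1000000 in
/-- the residue classes of the unconcatable words of short chords form a
basis of the homology `H^*(CE(∂Λ; V), ∂₀)`. -/
theorem stmt10 (n : ℕ) :
    ∃ hmem : ∀ w : {w : Σ i : Fin n, Σ j : Fin n, Quiver.Path i j //
          Unconcatable w.2.2 ∧ AllShort w.2.2},
        Finsupp.single (w.val) (1 : ZMod 2) ∈ LinearMap.ker (bigD n),
      LinearIndependent (ZMod 2) (fun w => classOf n w (hmem w)) ∧
      Submodule.span (ZMod 2) (Set.range (fun w => classOf n w (hmem w))) = ⊤ := by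
  have hmem : ∀ w : {w : Σ i : Fin n, Σ j : Fin n, Quiver.Path i j //
      Unconcatable w.2.2 ∧ AllShort w.2.2},
      Finsupp.single (w.val) (1 : ZMod 2) ∈ LinearMap.ker (bigD n) := by
    rintro ⟨⟨i, j, p⟩, h1, h2⟩
    rw [LinearMap.mem_ker]
    show bigD n (Finsupp.single (emb i j p) 1) = 0
    rw [bigD_single, pathD_shortword p (totalLen_of_basis p h1 h2), Finsupp.mapDomain_zero]
  have hker : ∀ x : (BigIx n) →₀ ZMod 2, bigP n x ∈ LinearMap.ker (bigD n) :=
    fun x => LinearMap.mem_ker.2 (bigD_bigP x)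
  refine ⟨hmem, ?_, ?_⟩
  · -- linear independence
    have hli0 : LinearIndependent (ZMod 2)
        (fun w : {w : Σ i : Fin n, Σ j : Fin n, Quiver.Path i j //
          Unconcatable w.2.2 ∧ AllShort w.2.2} => Finsupp.single w.val (1 : ZMod 2)) := by
      have h2 := (Finsupp.basisSingleOne (R := ZMod 2)
        (ι := BigIx n)).linearIndependent.comp
        (Subtype.val : {w : Σ i : Fin n, Σ j : Fin n, Quiver.Path i j //
          Unconcatable w.2.2 ∧ AllShort w.2.2} → BigIx n) Subtype.val_injective
      have heq : (⇑(Finsupp.basisSingleOne (R := ZMod 2) (ι := BigIx n)) ∘ Subtype.val) =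
          fun w : {w : Σ i : Fin n, Σ j : Fin n, Quiver.Path i j //
            Unconcatable w.2.2 ∧ AllShort w.2.2} => Finsupp.single w.val (1 : ZMod 2) := by
        funext w
        simp [Finsupp.coe_basisSingleOne]
      rw [← heq]
      exact h2
    rw [linearIndependent_iff']
    intro s g hsum w0 hw0
    have hmk : Submodule.mkQ
        ((LinearMap.range (bigD n)).comap (LinearMap.ker (bigD n)).subtype)
        (∑ w ∈ s, g w • (⟨Finsupp.single w.val 1, hmem w⟩ : LinearMap.ker (bigD n))) = 0 := by
      rw [map_sum, ← hsum]
      exact Finset.sum_congr rfl (fun w _ => by rw [map_smul]; rfl)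
    rw [Submodule.mkQ_apply, Submodule.Quotient.mk_eq_zero, Submodule.mem_comap] at hmk
    obtain ⟨y, hy⟩ := hmk
    have hzval : ((LinearMap.ker (bigD n)).subtype
        (∑ w ∈ s, g w • (⟨Finsupp.single w.val 1, hmem w⟩ : LinearMap.ker (bigD n)))) =
        ∑ w ∈ s, g w • Finsupp.single w.val 1 := by
      rw [map_sum]
      exact Finset.sum_congr rfl (fun w _ => by rw [map_smul]; rfl)
    rw [hzval] at hy
    have h0 : bigP n (∑ w ∈ s, g w • Finsupp.single w.val (1 : ZMod 2)) = 0 := by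
      rw [← hy, bigP_bigD]
    rw [map_sum] at h0
    have hfix : ∀ w ∈ s, bigP n (g w • Finsupp.single w.val (1 : ZMod 2)) =
        g w • Finsupp.single w.val 1 := by
      rintro ⟨⟨i, j, p⟩, hw1, hw2⟩ _
      rw [map_smul]
      exact congrArg (fun z => _ • z) (bigP_single_basis i j p (totalLen_of_basis p hw1 hw2))
    rw [Finset.sum_congr rfl hfix] at h0
    exact linearIndependent_iff'.1 hli0 s g h0 w0 hw0
  · -- spanning
    rw [eq_top_iff]
    rintro xb -
    obtain ⟨z, rfl⟩ := Submodule.Quotient.mk_surjective _ xb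
    have hD : bigD n (z : (BigIx n) →₀ ZMod 2) = 0 := LinearMap.mem_ker.1 z.2
    have hstep : (Submodule.Quotient.mk z :
        (LinearMap.ker (bigD n)) ⧸
          ((LinearMap.range (bigD n)).comap (LinearMap.ker (bigD n)).subtype)) =
        Submodule.Quotient.mk (⟨bigP n z.val, hker z.val⟩ : LinearMap.ker (bigD n)) := by
      rw [Submodule.Quotient.eq, Submodule.mem_comap]
      refine ⟨bigH n (z : (BigIx n) →₀ ZMod 2), ?_⟩
      have h := big_homotopy (n := n) (z : (BigIx n) →₀ ZMod 2)
      rw [hD, map_zero, add_zero] at h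
      have hcoe : ((LinearMap.ker (bigD n)).subtype)
          (z - ⟨bigP n z.val, hker z.val⟩) = z.val - bigP n z.val := rfl
      have hsub : (z.val : (BigIx n) →₀ ZMod 2) - bigP n z.val = z.val + bigP n z.val := by
        rw [sub_eq_add_neg]
        congr 1
        rw [← neg_one_smul (ZMod 2) (bigP n z.val), show (-1 : ZMod 2) = 1 by decide,
          one_smul]
      rw [hcoe, hsub]
      exact h
    rw [hstep]
    set v : (BigIx n) →₀ ZMod 2 := bigP n z.val with hvdef
    have hsupp : ∀ a ∈ v.support, totalLen a.2.2 ≤ 1 := supp_bigP z.val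
    have hdec : ∑ a ∈ v.support.attach, (v a.val) •
        (⟨Finsupp.single a.val 1,
          hmem ⟨a.val, basis_of_totalLen a.val.2.2 (hsupp a.val a.2)⟩⟩ :
            LinearMap.ker (bigD n)) =
        (⟨v, hker z.val⟩ : LinearMap.ker (bigD n)) := by
      refine Subtype.ext ?_
      rw [Submodule.coe_sum]
      have hterm : ∀ a ∈ v.support.attach,
          (((v a.val) • (⟨Finsupp.single a.val 1,
            hmem ⟨a.val, basis_of_totalLen a.val.2.2 (hsupp a.val a.2)⟩⟩ :
              LinearMap.ker (bigD n)) : LinearMap.ker (bigD n)) :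
            (BigIx n) →₀ ZMod 2) = Finsupp.single a.val (v a.val) := by
        intro a _
        rw [SetLike.val_smul]
        show (v a.val) • Finsupp.single a.val (1 : ZMod 2) = _
        rw [Finsupp.smul_single, smul_eq_mul, mul_one]
      rw [Finset.sum_congr rfl hterm,
        Finset.sum_attach v.support (fun a => Finsupp.single a (v a))]
      exact Finsupp.sum_single v
    rw [← hdec]
    rw [← Submodule.mkQ_apply]
    rw [map_sum]
    refine Submodule.sum_mem _ ?_
    intro a _
    rw [map_smul]
    refine Submodule.smul_mem _ _ ?_
    rw [Submodule.mkQ_apply]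
    exact Submodule.subset_span
      ⟨⟨a.val, basis_of_totalLen a.val.2.2 (hsupp a.val a.2)⟩, rfl⟩

end Stmt10
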